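/- arXiv:1801.03482 — 4 statements merged into one kernel-verified Lean document; each statement's English description precedes it below -/
import Mathlib

section
/- For every α ∈ (ℤ²)⁺, every ℓ ∈ ℤ, and all Jordan types α̲, β̲ ∈ J_α, if β̲ ⪯ α̲ then ℓ(β̲) ≤ ℓ(α̲), i.e. the length of β̲ is at most the length of α̲. -/
/-- The positive cone `(ℤ²)⁺ = {(r,d) : r > 0, or r = 0 and d ≥ 0}`. -/
def PosClass (p : ℤ × ℤ) : Prop := 0 < p.1 ∨ (p.1 = 0 ∧ 0 ≤ p.2)

/-- The twist `β(n) := (r, d + n·r)` for `β = (r,d)`. -/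
def twist (β : ℤ × ℤ) (n : ℤ) : ℤ × ℤ := (β.1, β.2 + n * β.1)

/-- The standard order on `ℤ × ℤ`: `β ≤ α` iff `α - β ∈ (ℤ²)⁺`. -/
def StdLE (β α : ℤ × ℤ) : Prop := PosClass (α - β)

/-- `a = (α_1, …, α_s)` (a nonempty list, `s ≥ 1`, zero-indexed in Lean) is a Jordan type of
class `α` (for the parameter `ℓ`): all entries lie in `(ℤ²)⁺`, the last entry is nonzero, and
`α = Σ_{i=1}^s Σ_{k=0}^{i-1} α_i(-kℓ)`. -/
def IsJordanType (ℓ : ℤ) (α : ℤ × ℤ) (a : List (ℤ × ℤ)) : Prop :=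
  a ≠ [] ∧ (∀ x ∈ a, PosClass x) ∧ a.getLast? ≠ some 0 ∧
    α = ∑ j ∈ Finset.range a.length, ∑ k ∈ Finset.range (j + 1),
          twist (a.getD j 0) (-(k : ℤ) * ℓ)

/-- The `k`-th kernel class `K_k(α̲) = Σ_{h=1}^k Σ_{j=h}^s α_j((h-j)ℓ)`
(written here with zero-based indices `h ∈ [0,k)`, `j ∈ [h, s)`). -/
def kernelClass (ℓ : ℤ) (a : List (ℤ × ℤ)) (k : ℕ) : ℤ × ℤ :=
  ∑ h ∈ Finset.range k, ∑ j ∈ Finset.Ico h a.length,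
    twist (a.getD j 0) (((h : ℤ) - (j : ℤ)) * ℓ)

/-- `b ⪯ a` iff `K_k(a) ≤ K_k(b)` (standard order) for every `k ≥ 1`. -/
def Preceq (ℓ : ℤ) (b a : List (ℤ × ℤ)) : Prop :=
  ∀ k : ℕ, 1 ≤ k → StdLE (kernelClass ℓ a k) (kernelClass ℓ b k)

lemma posClass_fst_nonneg {p : ℤ × ℤ} (hp : PosClass p) : 0 ≤ p.1 := by
  rcases hp with h | ⟨h, _⟩
  · exact h.le
  · exact h.ge

/-- Stabilization: for `k ≥ length`, `kernelClass` equals the Jordan-type sum. -/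
lemma kernel_stab (ℓ : ℤ) (a : List (ℤ × ℤ)) (k : ℕ) (hk : a.length ≤ k) :
    kernelClass ℓ a k =
      ∑ j ∈ Finset.range a.length, ∑ i ∈ Finset.range (j + 1),
        twist (a.getD j 0) (-(i : ℤ) * ℓ) := by
  unfold kernelClass
  rw [← Finset.sum_subset (Finset.range_subset_range.2 hk)
      (fun h _ hh => by
        have : Finset.Ico h a.length = ∅ :=
          Finset.Ico_eq_empty (by simpa using hh)
        simp [this])]
  rw [Finset.range_eq_Ico, Finset.sum_Ico_Ico_comm]
  refine Finset.sum_congr rfl fun j hj => ?_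
  rw [← Finset.range_eq_Ico] at *
  rw [← Finset.sum_range_reflect]
  refine Finset.sum_congr rfl fun i hi => ?_
  have hi' : i ≤ j := by simpa [Nat.lt_succ_iff] using Finset.mem_range.1 hi
  congr 1
  have : ((j + 1 - 1 - i : ℕ) : ℤ) = (j : ℤ) - i := by
    have : j + 1 - 1 - i = j - i := by omega
    rw [this, Nat.cast_sub hi']
  rw [this]
  ring

/-- If `b ⪯ a` in `J_α` then the length of `b` is at most the length of `a`. -/
theorem length_le_of_preceq (ℓ : ℤ) (α : ℤ × ℤ) (hα : PosClass α)
    (a b : List (ℤ × ℤ)) (ha : IsJordanType ℓ α a) (hb : IsJordanType ℓ α b)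
    (h : Preceq ℓ b a) :
    b.length ≤ a.length := by
  by_contra hlt
  push_neg at hlt
  obtain ⟨hane, hapos, halast, haeq⟩ := ha
  obtain ⟨hbne, hbpos, hblast, hbeq⟩ := hb
  set n := a.length with hn
  set m := b.length with hm
  have hn1 : 1 ≤ n := List.length_pos_iff.2 hane
  have hm1 : 1 ≤ m := List.length_pos_iff.2 hbne
  -- entries of b are in the positive cone
  have hbj : ∀ j, j < m → PosClass (b.getD j 0) := by
    intro j hj
    have : b.getD j 0 ∈ b := by
      rw [List.getD_eq_getElem b 0 hj]
      exact List.getElem_mem hj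
    exact hbpos _ this
  -- kernel classes at large k equal α
  have hKa : kernelClass ℓ a n = α := by
    rw [kernel_stab ℓ a n le_rfl]; exact haeq.symm
  have hKbm : kernelClass ℓ b m = α := by
    rw [kernel_stab ℓ b m le_rfl]; exact hbeq.symm
  -- the tail sum S
  set S : ℤ × ℤ := ∑ h ∈ Finset.Ico n m, ∑ j ∈ Finset.Ico h m,
      twist (b.getD j 0) (((h : ℤ) - (j : ℤ)) * ℓ) with hS
  have hsplit : kernelClass ℓ b m = kernelClass ℓ b n + S := by
    unfold kernelClass
    simp only [← hm]
    rw [hS, Finset.range_eq_Ico,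
      ← Finset.sum_Ico_consecutive _ (Nat.zero_le n) hlt.le, Finset.range_eq_Ico]
  have hKb : kernelClass ℓ b n = α - S := by
    rw [← hKbm, hsplit]; abel
  have hP := h n hn1
  unfold StdLE at hP
  rw [hKa, hKb] at hP
  have hPS : PosClass (-S) := by
    have : α - S - α = -S := by abel
    rwa [this] at hP
  -- first components
  have hfst : S.1 = ∑ h ∈ Finset.Ico n m, ∑ j ∈ Finset.Ico h m, (b.getD j 0).1 := by
    rw [hS, Prod.fst_sum]
    refine Finset.sum_congr rfl fun h _ => ?_
    rw [Prod.fst_sum]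
    exact Finset.sum_congr rfl fun j _ => rfl
  have hterm_nonneg : ∀ h ∈ Finset.Ico n m, ∀ j ∈ Finset.Ico h m, 0 ≤ (b.getD j 0).1 := by
    intro h hh j hj
    exact posClass_fst_nonneg (hbj j (Finset.mem_Ico.1 hj).2)
  have hS1nonneg : 0 ≤ S.1 := by
    rw [hfst]
    exact Finset.sum_nonneg fun h hh =>
      Finset.sum_nonneg fun j hj => hterm_nonneg h hh j hj
  -- from PosClass (-S): S.1 = 0 and S.2 ≤ 0
  have hS1 : S.1 = 0 ∧ S.2 ≤ 0 := by
    rcases hPS with h1 | ⟨h1, h2⟩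
    · exfalso; simp only [Prod.fst_neg] at h1; omega
    · simp only [Prod.fst_neg, Prod.snd_neg] at h1 h2
      exact ⟨by omega, by omega⟩
  obtain ⟨hS1z, hS2le⟩ := hS1
  -- all first components in the tail vanish
  have hall1 : ∀ h ∈ Finset.Ico n m, ∀ j ∈ Finset.Ico h m, (b.getD j 0).1 = 0 := by
    have h0 : ∀ h ∈ Finset.Ico n m, (∑ j ∈ Finset.Ico h m, (b.getD j 0).1) = 0 := by
      rw [hfst] at hS1z
      exact (Finset.sum_eq_zero_iff_of_nonneg fun h hh =>
        Finset.sum_nonneg fun j hj => hterm_nonneg h hh j hj).1 hS1z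
    intro h hh j hj
    exact (Finset.sum_eq_zero_iff_of_nonneg fun j hj => hterm_nonneg h hh j hj).1
      (h0 h hh) j hj
  -- second components: S.2 is a sum of the (b_j).2, all nonneg
  have hsnd : S.2 = ∑ h ∈ Finset.Ico n m, ∑ j ∈ Finset.Ico h m, (b.getD j 0).2 := by
    rw [hS, Prod.snd_sum]
    refine Finset.sum_congr rfl fun h hh => ?_
    rw [Prod.snd_sum]
    refine Finset.sum_congr rfl fun j hj => ?_
    show (b.getD j 0).2 + ((h:ℤ) - j) * ℓ * (b.getD j 0).1 = (b.getD j 0).2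
    rw [hall1 h hh j hj]; ring
  have hsnd_nonneg : ∀ h ∈ Finset.Ico n m, ∀ j ∈ Finset.Ico h m, 0 ≤ (b.getD j 0).2 := by
    intro h hh j hj
    rcases hbj j (Finset.mem_Ico.1 hj).2 with h1 | ⟨_, h2⟩
    · exact absurd (hall1 h hh j hj) (by omega)
    · exact h2
  -- the last entry of b
  have hnIco : n ∈ Finset.Ico n m := Finset.mem_Ico.2 ⟨le_rfl, hlt⟩
  have hlastIco : m - 1 ∈ Finset.Ico n m := Finset.mem_Ico.2 ⟨by omega, by omega⟩
  have hlast_getD : b.getLast? = some (b.getD (m - 1) 0) := by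
    rw [List.getD_eq_getElem b 0 (by omega), List.getLast?_eq_getElem?,
      List.getElem?_eq_getElem (by omega)]
  have hlast_ne : b.getD (m - 1) 0 ≠ 0 := by
    intro hcontra
    exact hblast (by rw [hlast_getD, hcontra])
  have hlast1 : (b.getD (m - 1) 0).1 = 0 := hall1 n hnIco (m - 1) hlastIco
  have hlast2pos : 0 < (b.getD (m - 1) 0).2 := by
    have h2 := hsnd_nonneg n hnIco (m - 1) hlastIco
    rcases lt_or_eq_of_le h2 with h' | h'
    · exact h'
    · exfalso
      exact hlast_ne (Prod.ext hlast1 h'.symm)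
  -- contradiction: S.2 ≥ (b_{m-1}).2 > 0 but S.2 ≤ 0
  have hge : (b.getD (m - 1) 0).2 ≤ S.2 := by
    rw [hsnd]
    calc (b.getD (m - 1) 0).2
        ≤ ∑ j ∈ Finset.Ico n m, (b.getD j 0).2 :=
          Finset.single_le_sum (fun j hj => hsnd_nonneg n hnIco j hj) hlastIco
      _ ≤ ∑ h ∈ Finset.Ico n m, ∑ j ∈ Finset.Ico h m, (b.getD j 0).2 :=
          Finset.single_le_sum (f := fun h => ∑ j ∈ Finset.Ico h m, (b.getD j 0).2)
            (fun h hh => Finset.sum_nonneg fun j hj => hsnd_nonneg h hh j hj) hnIco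
  omega
end

section
/- The class of objects strongly generated by L is stable under extensions: if 0 → F' → F → F'' → 0 is a short exact sequence in an abelian category 𝒜 (with Ext groups defined) and both F' and F'' are strongly generated by L, then F is strongly generated by L. -/
open CategoryTheory CategoryTheory.Limits CategoryTheory.Abelian

attribute [local instance] CategoryTheory.Abelian.hasFiniteBiproducts

universe w v u

namespace ExtAux

open DerivedCategory

variable {C : Type u} [Category.{v} C] [Abelian C] [HasExt.{w} C]

variable (C) in
/-- The single functor composed with the homology functor is the identity. -/
noncomputable def nu [HasDerivedCategory.{w} C] :
    DerivedCategory.singleFunctor C 0 ⋙ DerivedCategory.homologyFunctor C 0 ≅ 𝟭 C :=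
  Functor.isoWhiskerRight
    { hom := (DerivedCategory.singleFunctorsPostcompQIso C).hom.hom 0
      inv := (DerivedCategory.singleFunctorsPostcompQIso C).inv.hom 0
      hom_inv_id := by rw [← SingleFunctors.comp_hom, Iso.hom_inv_id]; rfl
      inv_hom_id := by rw [← SingleFunctors.comp_hom, Iso.inv_hom_id]; rfl }
    (DerivedCategory.homologyFunctor C 0) ≪≫
  Functor.associator _ _ _ ≪≫
  Functor.isoWhiskerLeft (CochainComplex.singleFunctor C 0) (DerivedCategory.homologyFunctorFactors C 0) ≪≫
  HomologicalComplex.homologyFunctorSingleIso C _ 0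

/-- Conversion from `Ext A B 0` to an actual morphism `A ⟶ B`. -/
noncomputable def extToHom {A B : C} (x : Abelian.Ext A B 0) : A ⟶ B :=
  letI := HasDerivedCategory.standard C
  (nu C).inv.app A ≫
    (DerivedCategory.homologyFunctor C 0).map
      (x.hom ≫ (shiftFunctorZero' (DerivedCategory C) ((0 : ℕ) : ℤ) (by simp)).hom.app _) ≫
    (nu C).hom.app B

lemma extToHom_mk₀ {A B : C} (f : A ⟶ B) : extToHom (Abelian.Ext.mk₀ f) = f := by
  letI := HasDerivedCategory.standard C
  dsimp only [extToHom]
  rw [Abelian.Ext.mk₀_hom]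
  dsimp only [ShiftedHom.mk₀]
  rw [Category.assoc, Iso.inv_hom_id_app]
  simp only [Functor.id_obj, Category.comp_id]
  have h := (nu C).hom.naturality f
  simp only [Functor.comp_map, Functor.id_map] at h
  rw [h, ← Category.assoc, Iso.inv_hom_id_app]
  simp only [Functor.id_obj, Category.id_comp]

lemma extToHom_comp_mk₀ {A B B' : C} (x : Abelian.Ext A B 0) (g : B ⟶ B') :
    extToHom (x.comp (Abelian.Ext.mk₀ g) (add_zero 0)) = extToHom x ≫ g := by
  letI := HasDerivedCategory.standard C
  dsimp only [extToHom]
  rw [Abelian.Ext.comp_hom, Abelian.Ext.mk₀_hom, ShiftedHom.comp_mk₀]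
  have hnat := (shiftFunctorZero' (DerivedCategory C) ((0 : ℕ) : ℤ)
      (by simp)).hom.naturality ((DerivedCategory.singleFunctor C 0).map g)
  simp only [Functor.id_map] at hnat
  rw [Category.assoc, hnat, ← Category.assoc x.hom, Functor.map_comp, Category.assoc]
  have h := (nu C).hom.naturality g
  simp only [Functor.comp_map, Functor.id_map] at h
  rw [h]
  simp only [Category.assoc]

end ExtAux

/-- An object `F` of an abelian category is *strongly generated* by an object `L` if
`Ext¹(L,F) = 0` and there is an epimorphism `L^{⊕n} ↠ F` for some `n ∈ ℕ`. -/
def StronglyGenerated {C : Type u} [Category.{v} C] [Abelian C] [HasExt.{w} C]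
    (L F : C) : Prop :=
  (∀ x : Abelian.Ext L F 1, x = 0) ∧
  ∃ (n : ℕ) (π : (⨁ fun _ : Fin n => L) ⟶ F), Epi π

/-- Strong generation is stable under extensions: if `0 → F' → F → F'' → 0` is a short exact
sequence and both `F'` and `F''` are strongly generated by `L`, then so is `F`. -/
theorem stronglyGenerated_of_shortExact {C : Type u} [Category.{v} C] [Abelian C]
    [HasExt.{w} C] (L : C) (S : ShortComplex C) (hS : S.ShortExact)
    (h1 : StronglyGenerated.{w} L S.X₁) (h3 : StronglyGenerated.{w} L S.X₃) :
    StronglyGenerated.{w} L S.X₂ := by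
  obtain ⟨e1, a, π₁, hπ₁⟩ := h1
  obtain ⟨e3, b, π₃, hπ₃⟩ := h3
  constructor
  · -- vanishing of Ext¹(L, X₂)
    intro x
    obtain ⟨x₁, hx₁⟩ := Abelian.Ext.covariant_sequence_exact₂ L hS x (e3 _)
    rw [e1 x₁] at hx₁
    rw [← hx₁, Abelian.Ext.zero_comp]
  · -- construction of the epimorphism
    -- lift the components of `π₃` along `S.g`
    have hlift : ∀ i : Fin b, ∃ ψ : L ⟶ S.X₂,
        ψ ≫ S.g = biproduct.ι (fun _ : Fin b => L) i ≫ π₃ := by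
      intro i
      obtain ⟨x₂, hx₂⟩ := Abelian.Ext.covariant_sequence_exact₃ L hS
        (Abelian.Ext.mk₀ (biproduct.ι (fun _ : Fin b => L) i ≫ π₃)) (zero_add 1) (e1 _)
      refine ⟨ExtAux.extToHom x₂, ?_⟩
      rw [← ExtAux.extToHom_comp_mk₀, hx₂, ExtAux.extToHom_mk₀]
    choose ψ hψ using hlift
    refine ⟨a + b, biproduct.desc (fun i => Fin.addCases
      (fun j => biproduct.ι (fun _ : Fin a => L) j ≫ π₁ ≫ S.f) (fun j => ψ j) i), ?_⟩
    apply Preadditive.epi_of_cancel_zero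
    intro R u hu
    have hcomp : ∀ i : Fin (a + b), (Fin.addCases
        (fun j => biproduct.ι (fun _ : Fin a => L) j ≫ π₁ ≫ S.f)
        (fun j => ψ j) i : L ⟶ S.X₂) ≫ u = 0 := by
      intro i
      rw [← biproduct.ι_desc_assoc, hu, comp_zero]
    -- `S.f ≫ u = 0`
    have hfu : S.f ≫ u = 0 := by
      rw [← cancel_epi π₁, comp_zero]
      apply biproduct.hom_ext'
      intro j
      have h0 := hcomp (Fin.castAdd b j)
      rw [Fin.addCases_left] at h0
      simpa using h0
    -- factor `u` through `S.g`
    have : Epi S.g := hS.epi_g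
    obtain ⟨d, hd⟩ := hS.exact.desc' u hfu
    have hd3 : π₃ ≫ d = 0 := by
      apply biproduct.hom_ext'
      intro j
      have h0 := hcomp (Fin.natAdd a j)
      rw [Fin.addCases_right] at h0
      rw [comp_zero, ← Category.assoc, ← hψ j, Category.assoc, hd, h0]
    have hdz : d = 0 := by rwa [← cancel_epi π₃, comp_zero]
    rw [← hd, hdz, comp_zero]
end

section
/- The class of objects strongly generated by L is stable under quotients, provided Ext²(L,−) vanishes: let 𝒜 be an abelian category (with Ext groups defined) and L an object such that Ext²(L,K) = 0 for every object K of 𝒜 (as holds when 𝒜 has homological dimension one, e.g. 𝒜 = Coh(X) for a smooth projective curve X). If F is strongly generated by L and F → F'' is an epimorphism, then F'' is strongly generated by L. -/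
open CategoryTheory CategoryTheory.Limits CategoryTheory.Abelian

attribute [local instance] CategoryTheory.Abelian.hasFiniteBiproducts

universe w v u

/-- Strong generation is stable under quotients, provided `Ext²(L,−)` vanishes: if
`Ext²(L,K) = 0` for every `K`, `F` is strongly generated by `L` and `F ↠ F''` is an
epimorphism, then `F''` is strongly generated by `L`. -/
theorem stronglyGenerated_of_epi {C : Type u} [Category.{v} C] [Abelian C]
    [HasExt.{w} C] (L : C) (hExt2 : ∀ K : C, ∀ x : Abelian.Ext L K 2, x = 0)
    (F F'' : C) (hF : StronglyGenerated.{w} L F) (e : F ⟶ F'') (he : Epi e) :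
    StronglyGenerated.{w} L F'' := by
  obtain ⟨hF1, n, π, hπ⟩ := hF
  constructor
  · intro x
    let S : ShortComplex C := ShortComplex.mk (kernel.ι e) e (kernel.condition e)
    have hS : S.ShortExact :=
      { exact := ShortComplex.exact_of_f_is_kernel _ (kernelIsKernel e) }
    obtain ⟨x₂, hx₂⟩ := Ext.covariant_sequence_exact₃ L hS x rfl (hExt2 _ _)
    rw [← hx₂, hF1 x₂, Ext.zero_comp]
  · exact ⟨n, π ≫ e, epi_comp π e⟩
end

section
/- Strong generation is transitive, provided Ext²(L,−) vanishes: let 𝒜 be an abelian category (with Ext groups defined) and L an object such that Ext²(L,K) = 0 for every object K of 𝒜 (as holds when 𝒜 has homological dimension one, e.g. 𝒜 = Coh(X) for a smooth projective curve X). If L' is an object strongly generated by L, then every object F that is strongly generated by L' is also strongly generated by L. -/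
open CategoryTheory CategoryTheory.Limits CategoryTheory.Abelian

attribute [local instance] CategoryTheory.Abelian.hasFiniteBiproducts

universe w v u

section Aux

variable {C : Type u} [Category.{v} C] [Abelian C] [HasExt.{w} C]

lemma ext_mk₀_add {X Y : C} (f g : X ⟶ Y) :
    Ext.mk₀ (f + g) = Ext.mk₀ f + Ext.mk₀ g := by
  letI := HasDerivedCategory.standard C
  apply Ext.ext
  rw [Ext.add_hom, Ext.mk₀_hom, Ext.mk₀_hom, Ext.mk₀_hom, Functor.map_add]
  simp [ShiftedHom.mk₀]

/-- `Ext.mk₀` as an additive monoid hom. -/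
noncomputable def extMk₀Hom (X Y : C) : (X ⟶ Y) →+ Abelian.Ext X Y 0 :=
  AddMonoidHom.mk' Ext.mk₀ ext_mk₀_add

lemma ext_one_biproduct_vanish (L L' : C) (hL : ∀ x : Abelian.Ext L L' 1, x = 0)
    (m : ℕ) (x : Abelian.Ext L (⨁ fun _ : Fin m => L') 1) : x = 0 := by
  let G : ((⨁ fun _ : Fin m => L') ⟶ (⨁ fun _ : Fin m => L')) →+
      Abelian.Ext L (⨁ fun _ : Fin m => L') 1 :=
    (Ext.precomp x _ (add_zero 1)).comp (extMk₀Hom _ _)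
  have hG : ∀ f, G f = x.comp (Ext.mk₀ f) (add_zero 1) := fun _ => rfl
  have h1 : x = G (𝟙 _) := by rw [hG, Ext.comp_mk₀_id]
  rw [h1, ← biproduct.total, map_sum]
  apply Finset.sum_eq_zero
  intro j _
  rw [hG, ← Ext.mk₀_comp_mk₀,
    ← Ext.comp_assoc_of_second_deg_zero x _ _ (add_zero 1),
    hL (x.comp (Ext.mk₀ (biproduct.π (fun _ : Fin m => L') j)) (add_zero 1)),
    Ext.zero_comp]

end Aux

/-- Strong generation is transitive, provided `Ext²(L,−)` vanishes: if `Ext²(L,K) = 0` for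
every `K`, `L'` is strongly generated by `L`, and `F` is strongly generated by `L'`, then `F`
is strongly generated by `L`. -/
theorem stronglyGenerated_trans {C : Type u} [Category.{v} C] [Abelian C]
    [HasExt.{w} C] (L : C) (hExt2 : ∀ K : C, ∀ x : Abelian.Ext L K 2, x = 0)
    (L' F : C) (hL' : StronglyGenerated.{w} L L') (hF : StronglyGenerated.{w} L' F) :
    StronglyGenerated.{w} L F := by
  obtain ⟨h1L, n, p, hp⟩ := hL'
  obtain ⟨h1F, m, q, hq⟩ := hF
  constructor
  · -- Ext¹(L,F) = 0
    intro x
    -- short exact sequence 0 → ker q → ⨁ L' → F → 0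
    let S : ShortComplex C := ShortComplex.mk (kernel.ι q) q (kernel.condition q)
    have hS : S.ShortExact := { exact := ShortComplex.exact_kernel q }
    obtain ⟨x₂, hx₂⟩ := Ext.covariant_sequence_exact₃ L hS x rfl (hExt2 _ _)
    rw [← hx₂, ext_one_biproduct_vanish L L' h1L m x₂, Ext.zero_comp]
  · -- the epimorphism
    refine ⟨m * n, ?_, ?_⟩
    · exact (biproduct.whiskerEquiv
          (finProdFinEquiv.symm.trans (Equiv.sigmaEquivProd (Fin m) (Fin n)).symm)
          (fun _ => Iso.refl L)).hom ≫
        (biproductBiproductIso (fun _ : Fin m => Fin n) (fun _ _ => L)).inv ≫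
        biproduct.map (fun _ : Fin m => p) ≫ q
    · have : Epi (biproduct.map (fun _ : Fin m => p)) := inferInstance
      infer_instance
end
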